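/- (Top-index criterion of type B, k < n.) Let n ≥ 2 and 1 ≤ k ≤ n−1, and let a_1,…,a_n be nonnegative integers. Then for every integer t, the number of positive roots α ∈ Φ⁺_B with ⟨w(t), α⟩ < 0 equals k(4n+1−3k)/2 (the dimension of the isotropic Grassmannian B_n/P(α_k)) if and only if t > M^B_{k,a}. -/

import Mathlib

set_option maxHeartbeats 1000000

open Finset

/-- The positive roots of type `Bₙ`: `eₚ+e_q`, `eₚ-e_q` (`p<q`) and `eₚ`. -/
def PhiB (n : ℕ) : Set (Fin n → ℝ) :=
  {α | ∃ p q : Fin n, p < q ∧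
      α = fun i => (if i = p then (1:ℝ) else 0) + (if i = q then 1 else 0)} ∪
  {α | ∃ p q : Fin n, p < q ∧
      α = fun i => (if i = p then (1:ℝ) else 0) - (if i = q then 1 else 0)} ∪
  {α | ∃ p : Fin n, α = fun i => if i = p then (1:ℝ) else 0}

/-- Standard inner product on `ℝⁿ`. -/
noncomputable def ip (n : ℕ) (v w : Fin n → ℝ) : ℝ := ∑ i, v i * w i

/-- The coordinate form of the weight `λ+ρ-tλ_k` for type `Bₙ`, `k < n`
(coordinates are indexed one-based). -/
noncomputable def wB (n k : ℕ) (a : ℕ → ℤ) (t : ℤ) : Fin n → ℝ := fun i =>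
  (∑ u ∈ Icc (i.val + 1) (n - 1), (a u : ℝ)) + ((a n : ℝ) + 1) / 2
    + ((n : ℝ) - (i.val + 1)) - (if i.val + 1 ≤ k then (t : ℝ) else 0)

/-- `M^B_{k,a}`, the largest entry of the step matrix. -/
def MB (n k : ℕ) (a : ℕ → ℤ) : ℤ :=
  (∑ u ∈ Icc 1 (n - 1), a u) + (∑ u ∈ Icc (k + 1) (n - 1), a u) + a n
    + 2 * (n : ℤ) - (k : ℤ) - 1

noncomputable def bf (n : ℕ) (a : ℕ → ℤ) : Fin n → ℝ := fun i =>
  (∑ u ∈ Icc (i.val + 1) (n - 1), (a u : ℝ)) + ((a n : ℝ) + 1) / 2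
    + ((n : ℝ) - (i.val + 1))

lemma wB_eq (n k : ℕ) (a : ℕ → ℤ) (t : ℤ) (i : Fin n) :
    wB n k a t i = bf n a i - (if i.val + 1 ≤ k then (t : ℝ) else 0) := rfl

lemma bf_anti (n : ℕ) (a : ℕ → ℤ) (ha : ∀ u, 1 ≤ u → u ≤ n → 0 ≤ a u)
    {i j : Fin n} (hij : i ≤ j) : bf n a j ≤ bf n a i := by
  have hij' : i.val ≤ j.val := hij
  have h1 : ∑ u ∈ Icc (j.val + 1) (n - 1), (a u : ℝ) ≤
      ∑ u ∈ Icc (i.val + 1) (n - 1), (a u : ℝ) := by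
    apply Finset.sum_le_sum_of_subset_of_nonneg (Finset.Icc_subset_Icc (by omega) le_rfl)
    intro u hu _
    have hu' := Finset.mem_Icc.1 hu
    have : (0 : ℤ) ≤ a u := ha u (by omega) (by omega)
    exact_mod_cast this
  have h2 : ((j.val : ℝ)) ≥ i.val := by exact_mod_cast hij'
  unfold bf
  linarith

lemma bf_pos (n : ℕ) (a : ℕ → ℤ) (hn : 2 ≤ n) (ha : ∀ u, 1 ≤ u → u ≤ n → 0 ≤ a u)
    (i : Fin n) : 0 < bf n a i := by
  have h1 : (0:ℝ) ≤ ∑ u ∈ Icc (i.val + 1) (n - 1), (a u : ℝ) := by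
    apply Finset.sum_nonneg
    intro u hu
    have hu' := Finset.mem_Icc.1 hu
    have : (0 : ℤ) ≤ a u := ha u (by omega) (by omega)
    exact_mod_cast this
  have h2 : (0:ℤ) ≤ a n := ha n (by omega) le_rfl
  have h2' : (0:ℝ) ≤ (a n : ℝ) := by exact_mod_cast h2
  have h3 : i.val + 1 ≤ n := i.isLt
  have h3' : ((i.val : ℝ) + 1) ≤ n := by exact_mod_cast h3
  unfold bf
  linarith

lemma bf_M (n k : ℕ) (a : ℕ → ℤ) (hn : 2 ≤ n) (hk1 : 1 ≤ k) (hkn : k ≤ n - 1) :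
    bf n a ⟨0, by omega⟩ + bf n a ⟨k, by omega⟩ = ((MB n k a : ℤ) : ℝ) := by
  unfold bf MB
  push_cast
  ring

lemma ip_add (n : ℕ) (v : Fin n → ℝ) (p q : Fin n) :
    ip n v (fun i => (if i = p then (1:ℝ) else 0) + (if i = q then 1 else 0)) = v p + v q := by
  simp [ip, mul_add, Finset.sum_add_distrib, mul_ite, mul_one, mul_zero, Finset.sum_ite_eq']

lemma ip_sub (n : ℕ) (v : Fin n → ℝ) (p q : Fin n) :
    ip n v (fun i => (if i = p then (1:ℝ) else 0) - (if i = q then 1 else 0)) = v p - v q := by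
  simp [ip, mul_sub, Finset.sum_sub_distrib, mul_ite, mul_one, mul_zero, Finset.sum_ite_eq']

lemma ip_single (n : ℕ) (v : Fin n → ℝ) (p : Fin n) :
    ip n v (fun i => if i = p then (1:ℝ) else 0) = v p := by
  simp [ip, mul_ite, mul_one, mul_zero, Finset.sum_ite_eq']

lemma inj_add {n : ℕ} {p1 p2 q1 q2 : Fin n} (hp : p1 < p2) (hq : q1 < q2)
    (h : (fun i => (if i = p1 then (1:ℝ) else 0) + (if i = p2 then 1 else 0)) =
         (fun i => (if i = q1 then (1:ℝ) else 0) + (if i = q2 then 1 else 0))) :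
    p1 = q1 ∧ p2 = q2 := by
  have e1 := congrFun h q1
  have e2 := congrFun h q2
  simp only [if_pos rfl] at e1 e2
  rw [if_neg hq.ne] at e1
  rw [if_neg hq.ne'] at e2
  have d1 : q1 = p1 ∨ q1 = p2 := by
    by_contra hc
    push_neg at hc
    rw [if_neg (fun hh : q1 = p1 => hc.1 hh), if_neg (fun hh : q1 = p2 => hc.2 hh)] at e1
    norm_num at e1
  have d2 : q2 = p1 ∨ q2 = p2 := by
    by_contra hc
    push_neg at hc
    rw [if_neg (fun hh : q2 = p1 => hc.1 hh), if_neg (fun hh : q2 = p2 => hc.2 hh)] at e2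
    norm_num at e2
  have hpv : p1.val < p2.val := hp
  have hqv : q1.val < q2.val := hq
  rcases d1 with d1 | d1 <;> rcases d2 with d2 | d2 <;>
    first
      | exact ⟨d1.symm, d2.symm⟩
      | (exfalso
         have v1 := congrArg Fin.val d1
         have v2 := congrArg Fin.val d2
         omega)

lemma inj_sub {n : ℕ} {p1 p2 q1 q2 : Fin n} (hp : p1 < p2) (hq : q1 < q2)
    (h : (fun i => (if i = p1 then (1:ℝ) else 0) - (if i = p2 then 1 else 0)) =
         (fun i => (if i = q1 then (1:ℝ) else 0) - (if i = q2 then 1 else 0))) :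
    p1 = q1 ∧ p2 = q2 := by
  have e1 := congrFun h q1
  have e2 := congrFun h q2
  simp only [if_pos rfl] at e1 e2
  rw [if_neg hq.ne] at e1
  rw [if_neg hq.ne'] at e2
  have d1 : q1 = p1 := by
    by_contra hc
    rw [if_neg (fun hh : q1 = p1 => hc hh)] at e1
    split_ifs at e1 <;> norm_num at e1
  have d2 : q2 = p2 := by
    by_contra hc
    rw [if_neg (fun hh : q2 = p2 => hc hh)] at e2
    split_ifs at e2 <;> norm_num at e2
  exact ⟨d1.symm, d2.symm⟩

lemma inj_single {n : ℕ} {p1 q1 : Fin n}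
    (h : (fun i => (if i = p1 then (1:ℝ) else 0)) = (fun i => (if i = q1 then (1:ℝ) else 0))) :
    p1 = q1 := by
  have e1 := congrFun h p1
  simp only [if_pos rfl] at e1
  by_contra hc
  rw [if_neg hc] at e1
  norm_num at e1

lemma ne_add_sub {n : ℕ} {p1 p2 q1 q2 : Fin n} (hq : q1 < q2) :
    (fun i => (if i = p1 then (1:ℝ) else 0) + (if i = p2 then 1 else 0)) ≠
    (fun i => (if i = q1 then (1:ℝ) else 0) - (if i = q2 then 1 else 0)) := by
  intro h
  have e := congrFun h q2
  simp only [if_pos rfl] at e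
  rw [if_neg hq.ne'] at e
  split_ifs at e <;> norm_num at e

lemma ne_add_single {n : ℕ} {p1 p2 q1 : Fin n} (hp : p1 < p2) :
    (fun i => (if i = p1 then (1:ℝ) else 0) + (if i = p2 then 1 else 0)) ≠
    (fun i => (if i = q1 then (1:ℝ) else 0)) := by
  intro h
  have e1 := congrFun h p1
  have e2 := congrFun h p2
  simp only [if_pos rfl] at e1 e2
  rw [if_neg hp.ne] at e1
  rw [if_neg hp.ne'] at e2
  have d1 : p1 = q1 := by
    by_contra hc; rw [if_neg hc] at e1; norm_num at e1
  have d2 : p2 = q1 := by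
    by_contra hc; rw [if_neg hc] at e2; norm_num at e2
  exact hp.ne (d1.trans d2.symm)

lemma ne_sub_single {n : ℕ} {p1 p2 q1 : Fin n} (hp : p1 < p2) :
    (fun i => (if i = p1 then (1:ℝ) else 0) - (if i = p2 then 1 else 0)) ≠
    (fun i => (if i = q1 then (1:ℝ) else 0)) := by
  intro h
  have e := congrFun h p2
  simp only [if_pos rfl] at e
  rw [if_neg hp.ne'] at e
  split_ifs at e <;> norm_num at e

lemma card_lt_k (n k : ℕ) (hk : k ≤ n) :
    #(univ.filter fun p : Fin n => p.val < k) = k := by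
  rw [Finset.card_filter]
  rw [Fin.sum_univ_eq_sum_range (fun j => if j < k then (1:ℕ) else 0)]
  rw [← Finset.sum_subset (Finset.range_subset_range.2 hk)
      (fun x _ hnx => if_neg (by simpa using hnx))]
  rw [Finset.sum_congr rfl (fun x hx => if_pos (Finset.mem_range.1 hx))]
  simp

lemma card_ge_k (n k : ℕ) (hk : k ≤ n) :
    #(univ.filter fun p : Fin n => k ≤ p.val) = n - k := by
  have h1 := Finset.card_filter_add_card_filter_not
    (s := (univ : Finset (Fin n))) (p := fun p => p.val < k)
  have h2 : (univ.filter fun p : Fin n => ¬ p.val < k) =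
      univ.filter fun p : Fin n => k ≤ p.val := by
    apply Finset.filter_congr; intro x _; simp [not_lt]
  rw [h2, card_lt_k n k hk] at h1
  simp only [Finset.card_univ, Fintype.card_fin] at h1
  omega

lemma card_T2 (n k : ℕ) (hk : k ≤ n) :
    #((univ : Finset (Fin n × Fin n)).filter fun pq => pq.1.val < k ∧ k ≤ pq.2.val) =
      k * (n - k) := by
  have hsplit : ((univ : Finset (Fin n × Fin n)).filter fun pq => pq.1.val < k ∧ k ≤ pq.2.val)
      = (univ.filter fun p : Fin n => p.val < k) ×ˢ (univ.filter fun q : Fin n => k ≤ q.val) := by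
    ext pq
    simp only [Finset.mem_filter, Finset.mem_product, Finset.mem_univ, true_and]
  rw [hsplit, Finset.card_product, card_lt_k n k hk, card_ge_k n k hk]

lemma card_T1 (n k : ℕ) (hk : k ≤ n) :
    #((univ : Finset (Fin n × Fin n)).filter fun pq => pq.1 < pq.2 ∧ pq.1.val < k) =
      ∑ j ∈ range k, (n - 1 - j) := by
  rw [Finset.card_filter, ← Finset.univ_product_univ, Finset.sum_product]
  have hstep : ∀ p : Fin n,
      (∑ q : Fin n, if (p < q ∧ p.val < k) then (1:ℕ) else 0) =
        if p.val < k then n - 1 - p.val else 0 := by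
    intro p
    by_cases hp : p.val < k
    · rw [if_pos hp]
      rw [Finset.sum_congr rfl (fun q _ => by simp [hp] : ∀ q ∈ univ,
        (if (p < q ∧ p.val < k) then (1:ℕ) else 0) = if p < q then 1 else 0)]
      rw [← Finset.card_filter, Finset.filter_lt_eq_Ioi, Fin.card_Ioi]
    · rw [if_neg hp]
      exact Finset.sum_eq_zero (fun q _ => by simp [hp])
  rw [Finset.sum_congr rfl (fun p _ => hstep p)]
  rw [Fin.sum_univ_eq_sum_range (fun j => if j < k then n - 1 - j else 0)]
  rw [← Finset.sum_subset (Finset.range_subset_range.2 hk)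
      (fun x _ hnx => if_neg (by simpa using hnx))]
  exact Finset.sum_congr rfl (fun x hx => if_pos (Finset.mem_range.1 hx))

lemma sum_count (n k : ℕ) (hk1 : 1 ≤ k) (hkn : k ≤ n - 1) (hn : 2 ≤ n) :
    (∑ j ∈ range k, (n - 1 - j)) + k * (n - k) + k =
      k * (4 * n + 1 - 3 * k) / 2 := by
  obtain ⟨d, hd⟩ : ∃ d, n = k + d := ⟨n - k, by omega⟩
  subst hd
  obtain ⟨j, hj⟩ : ∃ j, k = j + 1 := ⟨k - 1, by omega⟩
  subst hj
  have hsum : ∑ x ∈ range (j+1), (j + 1 + d - 1 - x)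
      = (j+1) * d + ∑ x ∈ range (j+1), x := by
    calc ∑ x ∈ range (j+1), (j + 1 + d - 1 - x)
        = ∑ x ∈ range (j+1), (d + (j + 1 - 1 - x)) :=
          Finset.sum_congr rfl (fun x hx => by
            have := Finset.mem_range.1 hx; omega)
      _ = ∑ x ∈ range (j+1), (d + x) := Finset.sum_range_reflect (fun x => d + x) (j+1)
      _ = (j+1) * d + ∑ x ∈ range (j+1), x := by
          rw [Finset.sum_add_distrib, Finset.sum_const, Finset.card_range, smul_eq_mul]
  rw [hsum]
  have hm : (∑ x ∈ range (j+1), x) * 2 = (j+1) * j := by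
    rw [Finset.sum_range_id_mul_two]; simp
  set m := ∑ x ∈ range (j+1), x with hmdef
  have h1 : j + 1 + d - (j + 1) = d := by omega
  have h2 : 4 * (j + 1 + d) + 1 - 3 * (j + 1) = j + 4 * d + 2 := by omega
  rw [h1, h2]
  have key : (j+1) * (j + 4*d + 2) = 2 * ((j+1)*d + m + (j+1)*d + (j+1)) := by
    zify at hm ⊢
    linear_combination -hm
  rw [key, Nat.mul_div_cancel_left _ (by norm_num : 0 < 2)]

/-- Top-index criterion of type `B`, `k < n`: `λ+ρ-tλ_k` is regular of index
`dim Bₙ/P(α_k) = k(4n+1-3k)/2` iff `t > M^B_{k,a}`. -/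
theorem top_index_criterion_B_lt (n k : ℕ) (hn : 2 ≤ n) (hk1 : 1 ≤ k) (hkn : k ≤ n - 1)
    (a : ℕ → ℤ) (ha : ∀ u, 1 ≤ u → u ≤ n → 0 ≤ a u) (t : ℤ) :
    {α ∈ PhiB n | ip n (wB n k a t) α < 0}.ncard = k * (4 * n + 1 - 3 * k) / 2 ↔
      MB n k a < t := by
  classical
  have hkn' : k < n := by omega
  set w : Fin n → ℝ := wB n k a t with hw
  set i0 : Fin n := ⟨0, by omega⟩ with hi0
  set ik : Fin n := ⟨k, hkn'⟩ with hik
  set f1 : Fin n × Fin n → (Fin n → ℝ) :=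
    fun pq => fun i => (if i = pq.1 then (1:ℝ) else 0) + (if i = pq.2 then 1 else 0) with hf1
  set f2 : Fin n × Fin n → (Fin n → ℝ) :=
    fun pq => fun i => (if i = pq.1 then (1:ℝ) else 0) - (if i = pq.2 then 1 else 0) with hf2
  set f3 : Fin n → (Fin n → ℝ) :=
    fun p => fun i => (if i = p then (1:ℝ) else 0) with hf3
  set S1 := univ.filter (fun pq : Fin n × Fin n => pq.1 < pq.2 ∧ w pq.1 + w pq.2 < 0) with hS1
  set S2 := univ.filter (fun pq : Fin n × Fin n => pq.1 < pq.2 ∧ w pq.1 - w pq.2 < 0) with hS2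
  set S3 := univ.filter (fun p : Fin n => w p < 0) with hS3
  set T1 := univ.filter (fun pq : Fin n × Fin n => pq.1 < pq.2 ∧ pq.1.val < k) with hT1
  set T2 := univ.filter (fun pq : Fin n × Fin n => pq.1.val < k ∧ k ≤ pq.2.val) with hT2
  set T3 := univ.filter (fun p : Fin n => p.val < k) with hT3
  -- the set of negative roots is the coe of an explicit finset
  have hX : {α ∈ PhiB n | ip n w α < 0} = ↑((S1.image f1 ∪ S2.image f2) ∪ S3.image f3) := by
    ext α
    simp only [Set.mem_setOf_eq, Finset.coe_union, Set.mem_union, Finset.mem_coe,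
      Finset.mem_image, hS1, hS2, hS3, Finset.mem_filter, Finset.mem_univ, true_and]
    constructor
    · rintro ⟨hPhi, hip⟩
      simp only [PhiB, Set.mem_union, Set.mem_setOf_eq] at hPhi
      rcases hPhi with (⟨p, q, hpq, rfl⟩ | ⟨p, q, hpq, rfl⟩) | ⟨p, rfl⟩
      · rw [ip_add n w p q] at hip
        exact Or.inl (Or.inl ⟨(p, q), ⟨hpq, hip⟩, rfl⟩)
      · rw [ip_sub n w p q] at hip
        exact Or.inl (Or.inr ⟨(p, q), ⟨hpq, hip⟩, rfl⟩)
      · rw [ip_single n w p] at hip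
        exact Or.inr ⟨p, hip, rfl⟩
    · rintro ((⟨⟨p, q⟩, ⟨hpq, hlt⟩, rfl⟩ | ⟨⟨p, q⟩, ⟨hpq, hlt⟩, rfl⟩) | ⟨p, hlt, rfl⟩)
      · refine ⟨Or.inl (Or.inl ⟨p, q, hpq, rfl⟩), ?_⟩
        rw [hf1]; rw [ip_add n w p q]; exact hlt
      · refine ⟨Or.inl (Or.inr ⟨p, q, hpq, rfl⟩), ?_⟩
        rw [hf2]; rw [ip_sub n w p q]; exact hlt
      · refine ⟨Or.inr ⟨p, rfl⟩, ?_⟩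
        rw [hf3]; rw [ip_single n w p]; exact hlt
  rw [hX, Set.ncard_coe_finset]
  -- disjointness
  have hd12 : Disjoint (S1.image f1) (S2.image f2) := by
    rw [Finset.disjoint_left]
    rintro α hα1 hα2
    obtain ⟨⟨p1, p2⟩, hp, rfl⟩ := Finset.mem_image.1 hα1
    obtain ⟨⟨q1, q2⟩, hq, heq⟩ := Finset.mem_image.1 hα2
    exact ne_add_sub ((Finset.mem_filter.1 hq).2.1) heq.symm
  have hd13 : Disjoint (S1.image f1) (S3.image f3) := by
    rw [Finset.disjoint_left]
    rintro α hα1 hα2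
    obtain ⟨⟨p1, p2⟩, hp, rfl⟩ := Finset.mem_image.1 hα1
    obtain ⟨q1, hq, heq⟩ := Finset.mem_image.1 hα2
    exact ne_add_single ((Finset.mem_filter.1 hp).2.1) heq.symm
  have hd23 : Disjoint (S2.image f2) (S3.image f3) := by
    rw [Finset.disjoint_left]
    rintro α hα1 hα2
    obtain ⟨⟨p1, p2⟩, hp, rfl⟩ := Finset.mem_image.1 hα1
    obtain ⟨q1, hq, heq⟩ := Finset.mem_image.1 hα2
    exact ne_sub_single ((Finset.mem_filter.1 hp).2.1) heq.symm
  rw [Finset.card_union_of_disjoint (Finset.disjoint_union_left.2 ⟨hd13, hd23⟩),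
    Finset.card_union_of_disjoint hd12]
  -- injectivity
  have hinj1 : Set.InjOn f1 ↑S1 := by
    rintro ⟨p1, p2⟩ hp ⟨q1, q2⟩ hq heq
    have hp' := (Finset.mem_filter.1 hp).2.1
    have hq' := (Finset.mem_filter.1 hq).2.1
    have := inj_add hp' hq' heq
    exact Prod.ext this.1 this.2
  have hinj2 : Set.InjOn f2 ↑S2 := by
    rintro ⟨p1, p2⟩ hp ⟨q1, q2⟩ hq heq
    have hp' := (Finset.mem_filter.1 hp).2.1
    have hq' := (Finset.mem_filter.1 hq).2.1
    have := inj_sub hp' hq' heq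
    exact Prod.ext this.1 this.2
  have hinj3 : Set.InjOn f3 ↑S3 := by
    rintro p hp q hq heq
    exact inj_single heq
  rw [Finset.card_image_of_injOn hinj1, Finset.card_image_of_injOn hinj2,
    Finset.card_image_of_injOn hinj3]
  -- description of w
  have hwlt : ∀ i : Fin n, i.val + 1 ≤ k → w i = bf n a i - t := by
    intro i hi; rw [hw, wB_eq, if_pos hi]
  have hwge : ∀ i : Fin n, ¬ i.val + 1 ≤ k → w i = bf n a i := by
    intro i hi; rw [hw, wB_eq, if_neg hi, sub_zero]
  have hbM := bf_M n k a hn hk1 hkn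
  have hb0 : ∀ i : Fin n, bf n a i ≤ bf n a i0 :=
    fun i => bf_anti n a ha (show i0 ≤ i from Nat.zero_le _)
  have hbk : ∀ i : Fin n, k ≤ i.val → bf n a i ≤ bf n a ik :=
    fun i h => bf_anti n a ha (show ik ≤ i from h)
  have hbpos : ∀ i : Fin n, 0 < bf n a i := bf_pos n a hn ha
  -- S ⊆ T always
  have hS1T1 : S1 ⊆ T1 := by
    intro pq hp
    obtain ⟨-, hlt, hneg⟩ := Finset.mem_filter.1 hp
    refine Finset.mem_filter.2 ⟨Finset.mem_univ _, hlt, ?_⟩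
    by_contra hc
    have hv : pq.1.val < pq.2.val := hlt
    have h1 : w pq.1 = bf n a pq.1 := hwge pq.1 (by omega)
    have h2 : w pq.2 = bf n a pq.2 := hwge pq.2 (by omega)
    have := hbpos pq.1; have := hbpos pq.2
    rw [h1, h2] at hneg; linarith
  have hS2T2 : S2 ⊆ T2 := by
    intro pq hp
    obtain ⟨-, hlt, hneg⟩ := Finset.mem_filter.1 hp
    refine Finset.mem_filter.2 ⟨Finset.mem_univ _, ?_⟩
    have hv : pq.1.val < pq.2.val := hlt
    by_cases h1 : pq.1.val < k
    · refine ⟨h1, ?_⟩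
      by_contra hc
      have e1 : w pq.1 = bf n a pq.1 - t := hwlt pq.1 (by omega)
      have e2 : w pq.2 = bf n a pq.2 - t := hwlt pq.2 (by omega)
      have := bf_anti n a ha (le_of_lt hlt)
      rw [e1, e2] at hneg; linarith
    · exfalso
      have e1 : w pq.1 = bf n a pq.1 := hwge pq.1 (by omega)
      have e2 : w pq.2 = bf n a pq.2 := hwge pq.2 (by omega)
      have := bf_anti n a ha (le_of_lt hlt)
      rw [e1, e2] at hneg; linarith
  have hS3T3 : S3 ⊆ T3 := by
    intro p hp
    obtain ⟨-, hneg⟩ := Finset.mem_filter.1 hp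
    refine Finset.mem_filter.2 ⟨Finset.mem_univ _, ?_⟩
    by_contra hc
    have e1 : w p = bf n a p := hwge p (by omega)
    have := hbpos p
    rw [e1] at hneg; linarith
  -- card of T's
  have hcT1 : T1.card = ∑ j ∈ range k, (n - 1 - j) := card_T1 n k (by omega)
  have hcT2 : T2.card = k * (n - k) := card_T2 n k (by omega)
  have hcT3 : T3.card = k := card_lt_k n k (by omega)
  have htot : T1.card + T2.card + T3.card = k * (4 * n + 1 - 3 * k) / 2 := by
    rw [hcT1, hcT2, hcT3]; exact sum_count n k hk1 hkn hn
  constructor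
  · -- card = target → MB < t
    intro hcard
    have hle1 := Finset.card_le_card hS1T1
    have hle2 := Finset.card_le_card hS2T2
    have hle3 := Finset.card_le_card hS3T3
    have h1 : S1.card = T1.card := by omega
    have hST : S1 = T1 := Finset.eq_of_subset_of_card_le hS1T1 (le_of_eq h1.symm)
    have hmem : (i0, ik) ∈ T1 := by
      refine Finset.mem_filter.2 ⟨Finset.mem_univ _, ?_, ?_⟩
      · show i0 < ik
        show (0 : ℕ) < k
        omega
      · show (0 : ℕ) < k
        omega
    rw [← hST] at hmem
    have hneg := (Finset.mem_filter.1 hmem).2.2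
    have e1 : w i0 = bf n a i0 - t := hwlt i0 (show (0:ℕ) + 1 ≤ k by omega)
    have e2 : w ik = bf n a ik := hwge ik (show ¬ k + 1 ≤ k by omega)
    rw [e1, e2] at hneg
    have : ((MB n k a : ℤ) : ℝ) < (t : ℝ) := by linarith
    exact_mod_cast this
  · -- MB < t → card = target
    intro ht
    have hMt : ((MB n k a : ℤ) : ℝ) < (t : ℝ) := by exact_mod_cast ht
    have hbkpos := hbpos ik
    have htb0 : bf n a i0 < (t : ℝ) := by linarith
    have hT1S1 : T1 ⊆ S1 := by
      intro pq hp
      obtain ⟨-, hlt, hk'⟩ := Finset.mem_filter.1 hp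
      refine Finset.mem_filter.2 ⟨Finset.mem_univ _, hlt, ?_⟩
      have e1 : w pq.1 = bf n a pq.1 - t := hwlt pq.1 (by omega)
      have hb1 := hb0 pq.1
      by_cases h2 : pq.2.val + 1 ≤ k
      · have e2 : w pq.2 = bf n a pq.2 - t := hwlt pq.2 h2
        have hb2 := hb0 pq.2
        rw [e1, e2]; linarith
      · have e2 : w pq.2 = bf n a pq.2 := hwge pq.2 h2
        have hb2 := hbk pq.2 (by omega)
        rw [e1, e2]; linarith
    have hT2S2 : T2 ⊆ S2 := by
      intro pq hp
      obtain ⟨-, h1, h2⟩ := Finset.mem_filter.1 hp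
      refine Finset.mem_filter.2 ⟨Finset.mem_univ _, ?_, ?_⟩
      · show pq.1.val < pq.2.val
        omega
      · have e1 : w pq.1 = bf n a pq.1 - t := hwlt pq.1 (by omega)
        have e2 : w pq.2 = bf n a pq.2 := hwge pq.2 (by omega)
        have hb1 := hb0 pq.1
        have hb2 := hbpos pq.2
        rw [e1, e2]; linarith
    have hT3S3 : T3 ⊆ S3 := by
      intro p hp
      obtain ⟨-, h1⟩ := Finset.mem_filter.1 hp
      refine Finset.mem_filter.2 ⟨Finset.mem_univ _, ?_⟩
      have e1 : w p = bf n a p - t := hwlt p (by omega)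
      have hb1 := hb0 p
      rw [e1]; linarith
    rw [Finset.Subset.antisymm hS1T1 hT1S1, Finset.Subset.antisymm hS2T2 hT2S2,
      Finset.Subset.antisymm hS3T3 hT3S3]
    exact htot
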